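/- Let α > 0 and suppose Z is a stationary (KKT) point with multipliers μ_{ij}. Then for every i ∈ {1,…,N}: Σ_{j≠i} (ŵ_{ij}/(4α) − r²)² − Σ_{j≠i} (z_iᵀz_j − ŵ_{ij}/(4α))² = N r⁴ (1 − 1/d) + (1/(2α)) Σ_{j≠i} μ_{ij} (r² − z_iᵀz_j). In particular, since μ_{ij} ≥ 0 and z_iᵀz_j ≤ r² for all j, the left-hand side is at least N r⁴ (1 − 1/d). -/

import Mathlib

open Finset
open scoped BigOperators RealInnerProductSpace

/-- The set of indices whose label is `k`. -/
def classSet {N K : ℕ} (y : Fin N → Fin K) (k : Fin K) : Finset (Fin N) :=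
  Finset.univ.filter (fun j => y j = k)

/-- `T₂(i)`: the indices `j` with `ŵ i j = 1`. -/
def T2 {N : ℕ} (w : Fin N → Fin N → Bool) (i : Fin N) : Finset (Fin N) :=
  Finset.univ.filter (fun j => w i j = true)

/-- `T₁(i)`: the indices `j` in the class of `i` with `ŵ i j = 0`. -/
def T1 {N K : ℕ} (y : Fin N → Fin K) (w : Fin N → Fin N → Bool) (i : Fin N) :
    Finset (Fin N) :=
  Finset.univ.filter (fun j => y j = y i ∧ w i j = false)

/-- `ŵ` as a real-valued (0/1) matrix entry. -/
def wR {N : ℕ} (w : Fin N → Fin N → Bool) (i j : Fin N) : ℝ := if w i j then 1 else 0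

/-- The `d × N` matrix whose columns are the representations `z i`. -/
def Zmat {N d : ℕ} (z : Fin N → EuclideanSpace ℝ (Fin d)) : Matrix (Fin d) (Fin N) ℝ :=
  Matrix.of fun a i => z i a

/-- The graph Laplacian of the adjacency `a i j = ŵ i j + μ i j`. -/
noncomputable def Lmat {N : ℕ} (w : Fin N → Fin N → Bool) (μ : Fin N → Fin N → ℝ) :
    Matrix (Fin N) (Fin N) ℝ :=
  Matrix.of fun i j =>
    if i = j then ∑ k ∈ Finset.univ.erase i, (wR w i k + μ i k) else -(wR w i j + μ i j)

/-- The feature correlation matrix `C = (1/N) ∑ i, z i (z i)ᵀ`. -/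
noncomputable def Cmat {N d : ℕ} (z : Fin N → EuclideanSpace ℝ (Fin d)) :
    Matrix (Fin d) (Fin d) ℝ :=
  ((N : ℝ))⁻¹ • ∑ i, Matrix.of (fun a b => z i a * z i b)

/-- Stationarity (KKT) equation `Z L + 2 α N (C − (r²/d) I_d) Z = 0`
for the multipliers `μ`. -/
def IsKKT {N d : ℕ} (z : Fin N → EuclideanSpace ℝ (Fin d)) (w : Fin N → Fin N → Bool)
    (μ : Fin N → Fin N → ℝ) (α r : ℝ) : Prop :=
  Zmat z * Lmat w μ + (2 * α * (N : ℝ)) •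
    ((Cmat z - (r ^ 2 / (d : ℝ)) • (1 : Matrix (Fin d) (Fin d) ℝ)) * Zmat z) = 0

private lemma kkt_entry {N d : ℕ} (hN : 1 ≤ N)
    (r : ℝ) (z : Fin N → EuclideanSpace ℝ (Fin d))
    (w : Fin N → Fin N → Bool) (α : ℝ) (μ : Fin N → Fin N → ℝ)
    (hsym : ∀ i j, w i j = w j i) (hμsym : ∀ i j, μ i j = μ j i)
    (hstat : IsKKT z w μ α r) (a : Fin d) (i : Fin N) :
    z i a * (∑ k ∈ univ.erase i, (wR w i k + μ i k))
      - (∑ j ∈ univ.erase i, (wR w i j + μ i j) * z j a)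
      + 2 * α * ((∑ m, ⟪z i, z m⟫ * z m a) - (N:ℝ) * (r^2/(d:ℝ)) * z i a) = 0 := by
  have hNne : (N:ℝ) ≠ 0 := by positivity
  have hinner : ∀ u v : EuclideanSpace ℝ (Fin d), ⟪u, v⟫ = ∑ x, u x * v x := by
    intro u v; simp [PiLp.inner_apply, RCLike.inner_apply, mul_comm]
  have h := congrFun (congrFun hstat a) i
  simp only [Matrix.add_apply, Matrix.mul_apply, Matrix.smul_apply, Matrix.sub_apply,
    Matrix.one_apply, Matrix.zero_apply, Zmat, Lmat, Cmat, Matrix.of_apply, smul_eq_mul,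
    Matrix.sum_apply] at h
  have e1 : (∑ x : Fin N, z x a * if x = i then ∑ k ∈ Finset.univ.erase x, (wR w x k + μ x k)
        else -(wR w x i + μ x i))
      = z i a * (∑ k ∈ univ.erase i, (wR w i k + μ i k))
        - ∑ j ∈ univ.erase i, (wR w i j + μ i j) * z j a := by
    rw [← Finset.add_sum_erase _ _ (Finset.mem_univ i), if_pos rfl, sub_eq_add_neg,
      ← Finset.sum_neg_distrib]
    congr 1
    refine Finset.sum_congr rfl fun x hx => ?_
    rw [if_neg (Finset.ne_of_mem_erase hx)]
    unfold wR; rw [hsym x i, hμsym x i]; ring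
  have e2 : (∑ x : Fin d, ((↑N)⁻¹ * ∑ m : Fin N, z m a * z m x
        - r ^ 2 / ↑d * if a = x then 1 else 0) * z i x)
      = (↑N:ℝ)⁻¹ * (∑ m, ⟪z i, z m⟫ * z m a) - r ^ 2 / ↑d * z i a := by
    simp only [sub_mul, Finset.sum_sub_distrib, ite_mul, one_mul, zero_mul, mul_ite, mul_zero,
      Finset.sum_ite_eq, Finset.mem_univ, if_pos, mul_one]
    congr 1
    simp only [hinner, Finset.mul_sum, Finset.sum_mul]
    rw [Finset.sum_comm]
    exact Finset.sum_congr rfl fun m _ => Finset.sum_congr rfl fun x _ => by ring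
  rw [e1, e2] at h
  have hc : (N:ℝ) * (N:ℝ)⁻¹ = 1 := mul_inv_cancel₀ hNne
  linear_combination h - 2*α*(∑ m, ⟪z i, z m⟫ * z m a)*hc

theorem stmt_3
    (N d K : ℕ) (hN : 1 ≤ N) (hd : 1 ≤ d) (hK : 1 ≤ K)
    (r : ℝ) (hr : 0 < r)
    (z : Fin N → EuclideanSpace ℝ (Fin d)) (hz : ∀ i, ‖z i‖ = r)
    (y : Fin N → Fin K)
    (hD : ∀ k, (classSet y k).Nonempty)
    (w : Fin N → Fin N → Bool)
    (hsym : ∀ i j, w i j = w j i)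
    (hdiag : ∀ i, w i i = true)
    (hcls : ∀ i j, w i j = true → y i = y j)
    (α : ℝ) (hα : 0 < α)
    (μ : Fin N → Fin N → ℝ)
    (hμsym : ∀ i j, μ i j = μ j i) (hμdiag : ∀ i, μ i i = 0)
    (hμpos : ∀ i j, i ≠ j → 0 ≤ μ i j)
    (hstat : IsKKT z w μ α r) :
    ∀ i : Fin N,
      ((∑ j ∈ Finset.univ.erase i, (wR w i j / (4 * α) - r ^ 2) ^ 2) -
          (∑ j ∈ Finset.univ.erase i, (⟪z i, z j⟫ - wR w i j / (4 * α)) ^ 2)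
        = (N : ℝ) * r ^ 4 * (1 - 1 / (d : ℝ)) +
            (1 / (2 * α)) * ∑ j ∈ Finset.univ.erase i, μ i j * (r ^ 2 - ⟪z i, z j⟫)) ∧
      ((∑ j ∈ Finset.univ.erase i, (wR w i j / (4 * α) - r ^ 2) ^ 2) -
          (∑ j ∈ Finset.univ.erase i, (⟪z i, z j⟫ - wR w i j / (4 * α)) ^ 2)
        ≥ (N : ℝ) * r ^ 4 * (1 - 1 / (d : ℝ))) := by
  intro i
  have hαne : α ≠ 0 := ne_of_gt hα
  have hinner : ∀ u v : EuclideanSpace ℝ (Fin d), ⟪u, v⟫ = ∑ x, u x * v x := by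
    intro u v; simp [PiLp.inner_apply, RCLike.inner_apply, mul_comm]
  have hself : ∀ j, ⟪z j, z j⟫ = r ^ 2 := fun j => by
    rw [real_inner_self_eq_norm_sq, hz]
  have t1 : (∑ a : Fin d, z i a * z i a) = r ^ 2 := by rw [← hinner, hself]
  have hswap : ∀ (t : Finset (Fin N)) (c : Fin N → ℝ),
      (∑ a : Fin d, z i a * ∑ m ∈ t, c m * z m a) = ∑ m ∈ t, c m * ⟪z i, z m⟫ := by
    intro t c
    simp only [Finset.mul_sum]
    rw [Finset.sum_comm]
    refine Finset.sum_congr rfl fun m _ => ?_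
    rw [hinner, Finset.mul_sum]
    exact Finset.sum_congr rfl fun x _ => by ring
  have t2 := hswap (univ.erase i) (fun j => wR w i j + μ i j)
  have t3 := hswap (univ : Finset (Fin N)) (fun m => ⟪z i, z m⟫)
  have q1 : (∑ k ∈ univ.erase i, (wR w i k + μ i k))
      = (∑ k ∈ univ.erase i, wR w i k) + (∑ k ∈ univ.erase i, μ i k) :=
    Finset.sum_add_distrib
  -- the key scalar stationarity equation
  have key : r^2 * (∑ k ∈ univ.erase i, (wR w i k + μ i k))
      - (∑ j ∈ univ.erase i, (wR w i j + μ i j) * ⟪z i, z j⟫)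
      + 2 * α * ((∑ m, ⟪z i, z m⟫ * ⟪z i, z m⟫) - (N:ℝ) * (r^2/(d:ℝ)) * r^2) = 0 := by
    have h0 : (∑ a : Fin d, z i a *
        (z i a * (∑ k ∈ univ.erase i, (wR w i k + μ i k))
          - (∑ j ∈ univ.erase i, (wR w i j + μ i j) * z j a)
          + 2 * α * ((∑ m, ⟪z i, z m⟫ * z m a) - (N:ℝ) * (r^2/(d:ℝ)) * z i a))) = 0 := by
      refine Finset.sum_eq_zero fun a _ => ?_
      rw [kkt_entry hN r z w α μ hsym hμsym hstat a i, mul_zero]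
    have step : (∑ a : Fin d, z i a *
        (z i a * (∑ k ∈ univ.erase i, (wR w i k + μ i k))
          - (∑ j ∈ univ.erase i, (wR w i j + μ i j) * z j a)
          + 2 * α * ((∑ m, ⟪z i, z m⟫ * z m a) - (N:ℝ) * (r^2/(d:ℝ)) * z i a)))
        = ∑ a : Fin d,
          ((z i a * z i a) * (∑ k ∈ univ.erase i, (wR w i k + μ i k))
            - z i a * (∑ j ∈ univ.erase i, (wR w i j + μ i j) * z j a)
            + 2 * α * (z i a * (∑ m, ⟪z i, z m⟫ * z m a))
            - 2 * α * ((N:ℝ) * (r^2/(d:ℝ))) * (z i a * z i a)) :=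
      Finset.sum_congr rfl fun a _ => by ring
    rw [step] at h0
    simp only [Finset.sum_sub_distrib, Finset.sum_add_distrib] at h0
    rw [← Finset.sum_mul, ← Finset.mul_sum, ← Finset.mul_sum, t1, t2, t3] at h0
    linear_combination h0 + r^2 * q1
  -- split the full sum in key at the index i
  have hsplit : (∑ m, ⟪z i, z m⟫ * ⟪z i, z m⟫)
      = r^2 * r^2 + ∑ m ∈ univ.erase i, ⟪z i, z m⟫ * ⟪z i, z m⟫ := by
    rw [← Finset.add_sum_erase _ _ (Finset.mem_univ i), hself]
  rw [hsplit] at key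
  -- sum splitting facts
  have q2 : (∑ j ∈ univ.erase i, (wR w i j + μ i j) * ⟪z i, z j⟫)
      = (∑ j ∈ univ.erase i, wR w i j * ⟪z i, z j⟫)
        + (∑ j ∈ univ.erase i, μ i j * ⟪z i, z j⟫) := by
    rw [← Finset.sum_add_distrib]
    exact Finset.sum_congr rfl fun j _ => by ring
  have hmu : (∑ j ∈ Finset.univ.erase i, μ i j * (r ^ 2 - ⟪z i, z j⟫))
      = r^2 * (∑ k ∈ univ.erase i, μ i k) - (∑ j ∈ univ.erase i, μ i j * ⟪z i, z j⟫) := by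
    rw [Finset.mul_sum, ← Finset.sum_sub_distrib]
    exact Finset.sum_congr rfl fun j _ => by ring
  have hcard : ((univ.erase i).card : ℝ) = (N:ℝ) - 1 := by
    rw [Finset.card_erase_of_mem (Finset.mem_univ i), Finset.card_univ, Fintype.card_fin,
      Nat.cast_sub hN, Nat.cast_one]
  -- rewrite the goal LHS
  have hLHS : ((∑ j ∈ Finset.univ.erase i, (wR w i j / (4 * α) - r ^ 2) ^ 2) -
        (∑ j ∈ Finset.univ.erase i, (⟪z i, z j⟫ - wR w i j / (4 * α)) ^ 2))
      = ((N:ℝ) - 1) * r^4 - (∑ m ∈ univ.erase i, ⟪z i, z m⟫ * ⟪z i, z m⟫)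
        - (1/(2*α)) * (r^2 * (∑ k ∈ univ.erase i, wR w i k)
            - (∑ j ∈ univ.erase i, wR w i j * ⟪z i, z j⟫)) := by
    rw [← Finset.sum_sub_distrib]
    have step : (∑ j ∈ Finset.univ.erase i,
        ((wR w i j / (4 * α) - r ^ 2) ^ 2 - (⟪z i, z j⟫ - wR w i j / (4 * α)) ^ 2))
        = ∑ j ∈ Finset.univ.erase i,
          ((r:ℝ)^4 - ⟪z i, z j⟫ * ⟪z i, z j⟫
            - (1/(2*α)) * (r^2 * wR w i j - wR w i j * ⟪z i, z j⟫)) := by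
      refine Finset.sum_congr rfl fun j _ => ?_
      field_simp
      ring
    rw [step]
    simp only [Finset.sum_sub_distrib, Finset.sum_const, nsmul_eq_mul]
    rw [hcard, ← Finset.mul_sum]
    have e3 : (∑ j ∈ univ.erase i, (r^2 * wR w i j - wR w i j * ⟪z i, z j⟫))
        = r^2 * (∑ k ∈ univ.erase i, wR w i k)
          - (∑ j ∈ univ.erase i, wR w i j * ⟪z i, z j⟫) := by
      rw [Finset.sum_sub_distrib, ← Finset.mul_sum]
    rw [e3]
  have h2α : 2 * α * (1/(2*α)) = 1 := by field_simp
  have heq : ((∑ j ∈ Finset.univ.erase i, (wR w i j / (4 * α) - r ^ 2) ^ 2) -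
      (∑ j ∈ Finset.univ.erase i, (⟪z i, z j⟫ - wR w i j / (4 * α)) ^ 2))
      = (N : ℝ) * r ^ 4 * (1 - 1 / (d : ℝ)) +
          (1 / (2 * α)) * ∑ j ∈ Finset.univ.erase i, μ i j * (r ^ 2 - ⟪z i, z j⟫) := by
    rw [hLHS]
    linear_combination (-(1/(2*α))) * key - (1/(2*α)) * hmu
      + ((1/(2*α)) * r^2) * q1 + (-(1/(2*α))) * q2
      + (r^4 + (∑ m ∈ univ.erase i, ⟪z i, z m⟫ * ⟪z i, z m⟫)
          - (N:ℝ) * (r^2/(d:ℝ)) * r^2) * h2α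
  refine ⟨heq, ?_⟩
  rw [heq]
  have hmu0 : 0 ≤ ∑ j ∈ Finset.univ.erase i, μ i j * (r ^ 2 - ⟪z i, z j⟫) := by
    refine Finset.sum_nonneg fun j hj => ?_
    have hji : j ≠ i := Finset.ne_of_mem_erase hj
    refine mul_nonneg (hμpos i j (Ne.symm hji)) ?_
    have h1 := real_inner_le_norm (z i) (z j)
    rw [hz i, hz j] at h1
    nlinarith
  have h1 : (0:ℝ) ≤ 1/(2*α) := by positivity
  nlinarith [mul_nonneg h1 hmu0]
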